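/- For every 0 ≤ p ≤ ℓ and every face F, the action of F on V maps the subspace W^p V into itself; that is, W^p V is a submodule of V under the face-algebra action. -/

import Mathlib

open Finset
open scoped Classical

noncomputable section

/-- The face product of two sign vectors. -/
def faceMul {ι : Type*} (σ τ : ι → SignType) : ι → SignType :=
  fun i => if σ i = 0 then τ i else σ i

variable {ℓ : ℕ} {ι : Type*} [Fintype ι]

def IsFace (f : ι → ((Fin ℓ → ℝ) →ₗ[ℝ] ℝ)) (σ : ι → SignType) : Prop :=
  {x : Fin ℓ → ℝ | ∀ i, SignType.sign (f i x) = σ i}.Nonempty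

def IsChamber (f : ι → ((Fin ℓ → ℝ) →ₗ[ℝ] ℝ)) (σ : ι → SignType) : Prop :=
  IsFace f σ ∧ ∀ i, σ i ≠ 0

variable (f : ι → ((Fin ℓ → ℝ) →ₗ[ℝ] ℝ))

def Chambers := {σ : ι → SignType // IsChamber f σ}

instance : Fintype (Chambers f) := Subtype.fintype _

/-- The Heaviside function of the hyperplane `H_i`. -/
def heav (i : ι) : Chambers f → ℝ := fun C => if C.1 i = 1 then 1 else 0

/-- The Heaviside monomial `x_I = ∏_{i ∈ I} x_i`. -/
def heavMon (I : Finset ι) : Chambers f → ℝ := fun C => ∏ i ∈ I, heav f i C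

/-- The degree filtration `P_p`: the span of the Heaviside monomials of degree at most `p`. -/
def Pfil (p : ℕ) : Submodule ℝ (Chambers f → ℝ) :=
  Submodule.span ℝ {g | ∃ I : Finset ι, I.card ≤ p ∧ g = heavMon f I}

/-- `P_{p-1}`, with the convention `P_{−1} = 0`. -/
def Pprev : ℕ → Submodule ℝ (Chambers f → ℝ)
  | 0 => ⊥
  | q + 1 => Pfil f q

/-- The pairing `v ↦ ⟨g, v⟩ = ∑_C g(C)·v_C` on the free module on chambers. -/
def pairFin (g : Chambers f → ℝ) : (Chambers f →₀ ℝ) →ₗ[ℝ] ℝ :=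
  ∑ C : Chambers f, g C • Finsupp.lapply C

/-- The dual filtration `W^p V = {v : ⟨g, v⟩ = 0 for all g ∈ P_{p−1}}` (so `W^0 V = V`). -/
def Wfil (p : ℕ) : Submodule ℝ (Chambers f →₀ ℝ) :=
  ⨅ g ∈ (Pprev f p : Set (Chambers f → ℝ)), LinearMap.ker (pairFin f g)

/-- The basis vector of the free module on chambers indexed by a sign vector:
`e σ = single σ 1` when `σ` is a chamber (and junk `0` otherwise). -/
def eC (σ : ι → SignType) : Chambers f →₀ ℝ :=
  if h : IsChamber f σ then Finsupp.single ⟨σ, h⟩ 1 else 0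

/-- The linear action of a face `σ` on the free module on chambers: `e C ↦ e (σ∘C)`. -/
def faceAct (σ : ι → SignType) : (Chambers f →₀ ℝ) →ₗ[ℝ] (Chambers f →₀ ℝ) :=
  Finsupp.lsum ℝ fun C => LinearMap.toSpanSingleton ℝ _ (eC f (faceMul σ C.1))

/- ---------- auxiliary lemmas ---------- -/

lemma sign_add_of_abs_lt' {a b : ℝ} (h : |b| < |a|) :
    SignType.sign (a + b) = SignType.sign a := by
  rcases lt_trichotomy a 0 with h1 | h1 | h1
  · have hab : a + b < 0 := by
      have := abs_lt.mp h
      rw [abs_of_neg h1] at this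
      linarith [this.2]
    rw [sign_neg h1, sign_neg hab]
  · exfalso; rw [h1] at h; simp at h; exact absurd h (abs_nonneg b).not_gt
  · have hab : 0 < a + b := by
      have := abs_lt.mp h
      rw [abs_of_pos h1] at this
      linarith [this.1]
    rw [sign_pos h1, sign_pos hab]

/-- The product of a face with a chamber is a chamber. -/
lemma isChamber_faceMul {σ τ : ι → SignType}
    (hσ : IsFace f σ) (hτ : IsChamber f τ) : IsChamber f (faceMul σ τ) := by
  obtain ⟨x, hx⟩ := hσ
  obtain ⟨⟨y, hy⟩, hτ0⟩ := hτ
  have hne : ∀ i, faceMul σ τ i ≠ 0 := by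
    intro i
    by_cases h0 : σ i = 0
    · simpa [faceMul, h0] using hτ0 i
    · simpa [faceMul, h0] using h0
  refine ⟨?_, hne⟩
  by_cases hS : ∃ i, σ i ≠ 0
  · haveI : Nonempty ι := ⟨hS.choose⟩
    set S := Finset.univ.filter (fun i => σ i ≠ 0) with hSdef
    have hSne : S.Nonempty := ⟨hS.choose, by simp [hSdef, hS.choose_spec]⟩
    set d := S.inf' hSne (fun i => |f i x|) with hddef
    have hd : 0 < d := by
      rw [hddef, Finset.lt_inf'_iff]
      intro i hi
      have hi' : σ i ≠ 0 := by simpa [hSdef] using hi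
      have : f i x ≠ 0 := by
        intro h
        have := hx i
        rw [h] at this
        simp at this
        exact hi' this.symm
      exact abs_pos.mpr this
    set c := Finset.univ.sup' Finset.univ_nonempty (fun i => |f i y|) with hcdef
    have hc0 : 0 ≤ c := le_trans (abs_nonneg (f hS.choose y))
      (Finset.le_sup' (fun i => |f i y|) (Finset.mem_univ hS.choose))
    set ε := d / (c + 1) with hεdef
    have hε : 0 < ε := div_pos hd (by linarith)
    refine ⟨x + ε • y, ?_⟩
    intro i
    have hfi : f i (x + ε • y) = f i x + ε * f i y := by
      rw [map_add, map_smul]; rfl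
    by_cases h0 : σ i = 0
    · have hfx : f i x = 0 := by
        have := hx i; rw [h0] at this; exact sign_eq_zero_iff.mp this
      rw [hfi, hfx, zero_add]
      have : SignType.sign (ε * f i y) = SignType.sign (f i y) := by
        rw [sign_mul, sign_pos hε, one_mul]
      rw [this, hy i]
      simp [faceMul, h0]
    · have habs : |ε * f i y| < |f i x| := by
        have h1 : |ε * f i y| = ε * |f i y| := by
          rw [abs_mul, abs_of_pos hε]
        have h2' : |f i y| ≤ c := by
          rw [hcdef]; exact Finset.le_sup' (fun j => |f j y|) (Finset.mem_univ i)
        have h2 : ε * |f i y| ≤ ε * c :=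
          mul_le_mul_of_nonneg_left h2' hε.le
        have h3 : ε * c < ε * (c + 1) := by
          apply mul_lt_mul_of_pos_left _ hε; linarith
        have h4 : ε * (c + 1) = d := by
          rw [hεdef]; field_simp
        have h5 : d ≤ |f i x| :=
          Finset.inf'_le _ (by simp [hSdef, h0])
        linarith
      rw [hfi, sign_add_of_abs_lt' habs, hx i]
      simp [faceMul, h0]
  · push_neg at hS
    have : faceMul σ τ = τ := by funext i; simp [faceMul, hS i]
    rw [this]; exact ⟨y, hy⟩


/-- The face product with a chamber, as a map on chambers. -/
def chamberMul {σ : ι → SignType} (hσ : IsFace f σ) (C : Chambers f) : Chambers f :=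
  ⟨faceMul σ C.1, isChamber_faceMul f hσ C.2⟩

lemma pairFin_single (g : Chambers f → ℝ) (D : Chambers f) (r : ℝ) :
    pairFin f g (Finsupp.single D r) = g D * r := by
  simp [pairFin, Finsupp.lapply_apply, Finsupp.single_apply, Finset.sum_ite_eq,
    mul_comm]

lemma pair_faceAct {σ : ι → SignType} (hσ : IsFace f σ) (g : Chambers f → ℝ)
    (v : Chambers f →₀ ℝ) :
    pairFin f g (faceAct f σ v) = pairFin f (fun C => g (chamberMul f hσ C)) v := by
  have key : (pairFin f g).comp (faceAct f σ)
      = pairFin f (fun C => g (chamberMul f hσ C)) := by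
    apply Finsupp.lhom_ext
    intro D r
    have hch := isChamber_faceMul f hσ D.2
    simp only [LinearMap.comp_apply, faceAct, Finsupp.lsum_single,
      LinearMap.toSpanSingleton_apply, eC, dif_pos hch, map_smul, pairFin_single,
      smul_eq_mul]
    refine (congrArg (r * ·) (pairFin_single f g ⟨faceMul σ D.1, hch⟩ 1)).trans ?_
    rw [mul_one, mul_comm]; rfl
  calc pairFin f g (faceAct f σ v) = ((pairFin f g).comp (faceAct f σ)) v := rfl
    _ = pairFin f (fun C => g (chamberMul f hσ C)) v := by rw [key]

lemma pull_mem {σ : ι → SignType} (hσ : IsFace f σ) (p : ℕ) (g : Chambers f → ℝ)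
    (hg : g ∈ Pprev f p) : (fun C => g (chamberMul f hσ C)) ∈ Pprev f p := by
  have heq : (fun C => g (chamberMul f hσ C))
      = LinearMap.funLeft ℝ ℝ (chamberMul f hσ) g := rfl
  cases p with
  | zero =>
    simp only [Pprev, Submodule.mem_bot] at hg ⊢
    rw [hg]; funext C; rfl
  | succ q =>
    simp only [Pprev] at hg ⊢
    rw [heq]
    have hmap : Submodule.map (LinearMap.funLeft ℝ ℝ (chamberMul f hσ)) (Pfil f q)
        ≤ Pfil f q := by
      rw [Pfil, Submodule.map_span, Submodule.span_le]
      rintro g' ⟨g₀, ⟨I, hI, rfl⟩, rfl⟩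
      have hval : LinearMap.funLeft ℝ ℝ (chamberMul f hσ) (heavMon f I)
          = (∏ i ∈ I.filter (fun i => ¬ σ i = 0), (if σ i = 1 then (1:ℝ) else 0)) •
            heavMon f (I.filter (fun i => σ i = 0)) := by
        funext C
        show heavMon f I (chamberMul f hσ C) = _
        rw [heavMon]
        rw [← Finset.prod_filter_mul_prod_filter_not I (fun i => σ i = 0)]
        have h1 : ∀ i ∈ I.filter (fun i => σ i = 0),
            heav f i (chamberMul f hσ C) = heav f i C := by
          intro i hi
          have h0 : σ i = 0 := (Finset.mem_filter.mp hi).2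
          simp [heav, chamberMul, faceMul, h0]
        have h2 : ∀ i ∈ I.filter (fun i => ¬ σ i = 0),
            heav f i (chamberMul f hσ C) = (if σ i = 1 then (1:ℝ) else 0) := by
          intro i hi
          have h0 : ¬ σ i = 0 := (Finset.mem_filter.mp hi).2
          simp [heav, chamberMul, faceMul, h0]
        rw [Finset.prod_congr rfl h1, Finset.prod_congr rfl h2]
        simp [heavMon, mul_comm]
      rw [hval]
      exact Submodule.smul_mem _ _ (Submodule.subset_span
        ⟨I.filter (fun i => σ i = 0), le_trans (Finset.card_filter_le _ _) hI, rfl⟩)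
    exact hmap ⟨g, hg, rfl⟩

/-- For every `0 ≤ p ≤ ℓ`, the subspace `W^p V` is stable under the face-algebra action:
it is a submodule of `V` for the action of the face semigroup. -/
theorem faceAct_mem_Wfil {ℓ : ℕ} (hℓ : 1 ≤ ℓ) {ι : Type*} [Fintype ι] [Nonempty ι]
    (f : ι → ((Fin ℓ → ℝ) →ₗ[ℝ] ℝ)) (hf : ∀ i, f i ≠ 0)
    (hess : (⨅ i, LinearMap.ker (f i)) = ⊥) :
    ∀ p ≤ ℓ, ∀ σ : ι → SignType, IsFace f σ →
      ∀ v ∈ Wfil f p, faceAct f σ v ∈ Wfil f p := by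
  intro p hp σ hσ v hv
  simp only [Wfil, Submodule.mem_iInf, LinearMap.mem_ker] at hv ⊢
  intro g hg
  rw [pair_faceAct f hσ]
  exact hv _ (pull_mem f hσ p g hg)

end
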